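/- Let L be a finite lattice and K a finite lattice containing L as a sublattice, and assume that every congruence of L extends to K. Then K is a congruence-preserving extension of L if and only if for every prime interval p of K that is not an interval of L there exists a prime interval q of L such that con_K(p) = con_K(q). -/

import Mathlib

namespace ForkCongruence

/-- A congruence of a lattice: an equivalence relation compatible with `⊔` and `⊓`. -/
structure LatCon (K : Type*) [Lattice K] where
  rel : K → K → Prop
  refl : ∀ x, rel x x
  symm : ∀ {x y}, rel x y → rel y x
  trans : ∀ {x y z}, rel x y → rel y z → rel x z
  sup_comp : ∀ {a b c d}, rel a b → rel c d → rel (a ⊔ c) (b ⊔ d)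
  inf_comp : ∀ {a b c d}, rel a b → rel c d → rel (a ⊓ c) (b ⊓ d)

namespace LatCon

variable {K : Type*} [Lattice K]

theorem rel_ext {θ ψ : LatCon K} (h : θ.rel = ψ.rel) : θ = ψ := by
  cases θ; cases ψ; cases h; rfl

instance : PartialOrder (LatCon K) where
  le θ ψ := ∀ ⦃x y⦄, θ.rel x y → ψ.rel x y
  le_refl _ _ _ h := h
  le_trans _ _ _ h₁ h₂ _ _ h := h₂ (h₁ h)
  le_antisymm θ ψ h₁ h₂ :=
    rel_ext (by funext x y; exact propext ⟨fun h => h₁ h, fun h => h₂ h⟩)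

/-- The smallest lattice congruence containing a binary relation. -/
def gen (s : K → K → Prop) : LatCon K where
  rel x y := ∀ θ : LatCon K, (∀ a b, s a b → θ.rel a b) → θ.rel x y
  refl x _ _ := LatCon.refl _ x
  symm h θ hs := θ.symm (h θ hs)
  trans h₁ h₂ θ hs := θ.trans (h₁ θ hs) (h₂ θ hs)
  sup_comp h₁ h₂ θ hs := θ.sup_comp (h₁ θ hs) (h₂ θ hs)
  inf_comp h₁ h₂ θ hs := θ.inf_comp (h₁ θ hs) (h₂ θ hs)

instance : SemilatticeSup (LatCon K) where
  sup θ ψ := gen (fun x y => θ.rel x y ∨ ψ.rel x y)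
  le_sup_left θ ψ x y h χ hχ := hχ x y (Or.inl h)
  le_sup_right θ ψ x y h χ hχ := hχ x y (Or.inr h)
  sup_le θ ψ χ h₁ h₂ x y h := h χ (fun a b hab => hab.elim (fun w => h₁ w) (fun w => h₂ w))

instance : SemilatticeInf (LatCon K) where
  inf θ ψ :=
    { rel := fun x y => θ.rel x y ∧ ψ.rel x y
      refl := fun x => ⟨θ.refl x, ψ.refl x⟩
      symm := fun h => ⟨θ.symm h.1, ψ.symm h.2⟩
      trans := fun h₁ h₂ => ⟨θ.trans h₁.1 h₂.1, ψ.trans h₁.2 h₂.2⟩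
      sup_comp := fun h₁ h₂ => ⟨θ.sup_comp h₁.1 h₂.1, ψ.sup_comp h₁.2 h₂.2⟩
      inf_comp := fun h₁ h₂ => ⟨θ.inf_comp h₁.1 h₂.1, ψ.inf_comp h₁.2 h₂.2⟩ }
  inf_le_left _ _ _ _ h := h.1
  inf_le_right _ _ _ _ h := h.2
  le_inf _ _ _ h₁ h₂ _ _ h := ⟨h₁ h, h₂ h⟩

instance : Lattice (LatCon K) :=
  { (inferInstance : SemilatticeSup (LatCon K)),
    (inferInstance : SemilatticeInf (LatCon K)) with }

instance : OrderBot (LatCon K) where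
  bot :=
    { rel := Eq
      refl := fun _ => rfl
      symm := Eq.symm
      trans := Eq.trans
      sup_comp := fun h₁ h₂ => by rw [h₁, h₂]
      inf_comp := fun h₁ h₂ => by rw [h₁, h₂] }
  bot_le θ x y h := h ▸ θ.refl x

/-- The principal congruence `con(a, b)`: the smallest congruence collapsing `a` and `b`. -/
def conOf (a b : K) : LatCon K := gen (fun x y => x = a ∧ y = b)

/-- The restriction of a congruence of `K` to a sublattice `L`. -/
def restrict (θ : LatCon K) (L : Sublattice K) : LatCon L where
  rel x y := θ.rel ↑x ↑y
  refl x := θ.refl ↑x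
  symm h := θ.symm h
  trans h₁ h₂ := θ.trans h₁ h₂
  sup_comp {a b c d} h₁ h₂ := by
    show θ.rel ↑(a ⊔ c) ↑(b ⊔ d)
    rw [Sublattice.coe_sup, Sublattice.coe_sup]
    exact θ.sup_comp h₁ h₂
  inf_comp {a b c d} h₁ h₂ := by
    show θ.rel ↑(a ⊓ c) ↑(b ⊓ d)
    rw [Sublattice.coe_inf, Sublattice.coe_inf]
    exact θ.inf_comp h₁ h₂

/-- A congruence `α` of the sublattice `L` extends to `K` if it is the restriction of some
congruence of `K`. -/
def ExtendsTo {L : Sublattice K} (α : LatCon L) : Prop :=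
  ∃ θ : LatCon K, θ.restrict L = α

/-- The minimal extension of a congruence of a sublattice `L` of `K`: the smallest congruence
of `K` containing it (viewed as a set of pairs). -/
def minExt {L : Sublattice K} (α : LatCon L) : LatCon K :=
  gen (fun x y => ∃ (hx : x ∈ L) (hy : y ∈ L), α.rel ⟨x, hx⟩ ⟨y, hy⟩)

end LatCon

/-- `K` is a congruence-preserving extension of its sublattice `L`: the restriction map is a
bijection from the congruences of `K` onto the congruences of `L`. -/
def IsCongPresExt {K : Type*} [Lattice K] (L : Sublattice K) : Prop :=
  Function.Bijective (fun θ : LatCon K => θ.restrict L)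

/-- A lattice is semimodular if `x ⊓ y ⋖ y` implies `x ⋖ x ⊔ y`. -/
def IsSemimodular (K : Type*) [Lattice K] : Prop :=
  ∀ x y : K, x ⊓ y ⋖ y → x ⋖ x ⊔ y

/-- A lattice is slim if its set of join-irreducible elements contains no three-element
antichain. -/
def IsSlim (K : Type*) [Lattice K] : Prop :=
  ¬ ∃ x y z : K, SupIrred x ∧ SupIrred y ∧ SupIrred z ∧
      ¬x ≤ y ∧ ¬y ≤ x ∧ ¬x ≤ z ∧ ¬z ≤ x ∧ ¬y ≤ z ∧ ¬z ≤ y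

/-- An SPS lattice: slim, planar (which follows from slimness together with semimodularity)
and semimodular. Finiteness is assumed separately as `[Finite K]`. -/
def IsSPS (K : Type*) [Lattice K] : Prop :=
  IsSemimodular K ∧ IsSlim K

/-- A covering square `S = {o, a_l, a_r, i}` of a lattice. -/
structure CovSquare (K : Type*) [Lattice K] where
  o : K
  al : K
  ar : K
  i : K
  al_ne_ar : al ≠ ar
  inf_eq : al ⊓ ar = o
  sup_eq : al ⊔ ar = i
  o_covby_al : o ⋖ al
  o_covby_ar : o ⋖ ar
  al_covby_i : al ⋖ i
  ar_covby_i : ar ⋖ i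

namespace CovSquare

variable {K : Type*} [Lattice K]

/-- A covering square is tight if `a_l` and `a_r` are the only lower covers of `i`. -/
def Tight (S : CovSquare K) : Prop :=
  ∀ x : K, x ⋖ S.i → x = S.al ∨ x = S.ar

/-- A covering square is wide if it is not tight. -/
def Wide (S : CovSquare K) : Prop := ¬ S.Tight

/-- A covering square is distributive if the principal ideal `↓i` is a distributive lattice. -/
def Distributive (S : CovSquare K) : Prop :=
  ∀ x y z : K, x ≤ S.i → y ≤ S.i → z ≤ S.i →
    x ⊓ (y ⊔ z) = (x ⊓ y) ⊔ (x ⊓ z)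

end CovSquare

/-- `K` together with the data below is the fork extension `L[S]` of the sublattice `L` of `K`
at the covering square `S` of `L`. The elements `xl k, yl k, zl k` represent
`x_{l,k+1}, y_{l,k+1}, z_{l,k+1}` of the construction (`0`-based indexing), and similarly
on the right. -/
structure ForkExtension (K : Type*) [Lattice K] (L : Sublattice K) (S : CovSquare L) where
  n : ℕ
  m : ℕ
  npos : 0 < n
  mpos : 0 < m
  t : K
  zl : ℕ → K
  zr : ℕ → K
  xl : ℕ → L
  yl : ℕ → L
  xr : ℕ → L
  yr : ℕ → L
  xl_zero : xl 0 = S.al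
  yl_zero : yl 0 = S.o
  xr_zero : xr 0 = S.ar
  yr_zero : yr 0 = S.o
  -- the successive covering squares `{y_{l,k+1}, x_{l,k+1}, y_{l,k}, x_{l,k}}` in `L`
  xl_succ_covby : ∀ k, k + 1 < n → xl (k + 1) ⋖ xl k
  yl_succ_covby : ∀ k, k + 1 < n → yl (k + 1) ⋖ yl k
  yl_covby_xl : ∀ k, k < n → yl k ⋖ xl k
  xl_succ_ne_yl : ∀ k, k + 1 < n → xl (k + 1) ≠ yl k
  xl_inf_yl : ∀ k, k + 1 < n → xl (k + 1) ⊓ yl k = yl (k + 1)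
  xl_sup_yl : ∀ k, k + 1 < n → xl (k + 1) ⊔ yl k = xl k
  -- `n` is largest possible
  left_max : ¬ ∃ x : L, x ⋖ xl (n - 1) ∧ x ≠ yl (n - 1) ∧
      x ⊓ yl (n - 1) ⋖ x ∧ x ⊓ yl (n - 1) ⋖ yl (n - 1) ∧ x ⊔ yl (n - 1) = xl (n - 1)
  -- the same on the right
  xr_succ_covby : ∀ k, k + 1 < m → xr (k + 1) ⋖ xr k
  yr_succ_covby : ∀ k, k + 1 < m → yr (k + 1) ⋖ yr k
  yr_covby_xr : ∀ k, k < m → yr k ⋖ xr k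
  xr_succ_ne_yr : ∀ k, k + 1 < m → xr (k + 1) ≠ yr k
  xr_inf_yr : ∀ k, k + 1 < m → xr (k + 1) ⊓ yr k = yr (k + 1)
  xr_sup_yr : ∀ k, k + 1 < m → xr (k + 1) ⊔ yr k = xr k
  right_max : ¬ ∃ x : L, x ⋖ xr (m - 1) ∧ x ≠ yr (m - 1) ∧
      x ⊓ yr (m - 1) ⋖ x ∧ x ⊓ yr (m - 1) ⋖ yr (m - 1) ∧ x ⊔ yr (m - 1) = xr (m - 1)
  -- the new elements
  t_not_mem : t ∉ L
  zl_not_mem : ∀ k, k < n → zl k ∉ L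
  zr_not_mem : ∀ k, k < m → zr k ∉ L
  mem_or_new : ∀ x : K, x ∈ L ∨ x = t ∨ (∃ k < n, x = zl k) ∨ (∃ k < m, x = zr k)
  -- `{o, z_{l,1}, z_{r,1}, a_l, a_r, t, i}` is a sublattice isomorphic to `S7`
  zl_sup_zr : zl 0 ⊔ zr 0 = t
  zl_zero_covby_t : zl 0 ⋖ t
  zr_zero_covby_t : zr 0 ⋖ t
  t_covby_i : t ⋖ (S.i : K)
  -- the chains `z_{l,1} ≻ ⋯ ≻ z_{l,n}` and `z_{r,1} ≻ ⋯ ≻ z_{r,m}`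
  zl_succ_covby : ∀ k, k + 1 < n → zl (k + 1) ⋖ zl k
  zr_succ_covby : ∀ k, k + 1 < m → zr (k + 1) ⋖ zr k
  -- `y_{l,k} ⋖ z_{l,k} ⋖ x_{l,k}` in `K`, and similarly on the right
  yl_covby_zl : ∀ k, k < n → (yl k : K) ⋖ zl k
  zl_covby_xl : ∀ k, k < n → zl k ⋖ (xl k : K)
  yr_covby_zr : ∀ k, k < m → (yr k : K) ⋖ zr k
  zr_covby_xr : ∀ k, k < m → zr k ⋖ (xr k : K)

namespace ForkExtension

variable {K : Type*} [Lattice K] {L : Sublattice K} {S : CovSquare L}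

/-- `x_{l,k+1}` is a (left) protrusion: it has at least three lower covers in `L`. -/
def ProtL (F : ForkExtension K L S) (k : ℕ) : Prop :=
  k < F.n ∧ ∃ u v w : L, u ≠ v ∧ u ≠ w ∧ v ≠ w ∧
    u ⋖ F.xl k ∧ v ⋖ F.xl k ∧ w ⋖ F.xl k

/-- `x_{r,k+1}` is a (right) protrusion: it has at least three lower covers in `L`. -/
def ProtR (F : ForkExtension K L S) (k : ℕ) : Prop :=
  k < F.m ∧ ∃ u v w : L, u ≠ v ∧ u ≠ w ∧ v ≠ w ∧
    u ⋖ F.xr k ∧ v ⋖ F.xr k ∧ w ⋖ F.xr k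

end ForkExtension




namespace LatCon

variable {K : Type*} [Lattice K]

lemma gen_rel_of (s : K → K → Prop) {a b : K} (h : s a b) : (gen s).rel a b :=
  fun θ hs => hs a b h

lemma gen_le {s : K → K → Prop} {θ : LatCon K} (h : ∀ a b, s a b → θ.rel a b) : gen s ≤ θ :=
  fun _ _ hxy => hxy θ h

lemma conOf_rel_self (a b : K) : (conOf a b).rel a b := gen_rel_of _ ⟨rfl, rfl⟩

lemma conOf_le {a b : K} {θ : LatCon K} (h : θ.rel a b) : conOf a b ≤ θ :=
  gen_le (fun x y hxy => hxy.1 ▸ hxy.2 ▸ h)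

lemma rel_of_between {θ : LatCon K} {a b x y : K} (h : θ.rel a b)
    (hax : a ≤ x) (hxy : x ≤ y) (hyb : y ≤ b) : θ.rel x y := by
  have h1 : θ.rel (a ⊔ x) (b ⊔ x) := θ.sup_comp h (θ.refl x)
  rw [sup_eq_right.mpr hax, sup_eq_left.mpr (hxy.trans hyb)] at h1
  have h2 : θ.rel (x ⊓ y) (b ⊓ y) := θ.inf_comp h1 (θ.refl y)
  rwa [inf_eq_left.mpr hxy, inf_eq_right.mpr hyb] at h2

lemma rel_inf_sup {θ : LatCon K} {a b : K} (h : θ.rel a b) : θ.rel (a ⊓ b) (a ⊔ b) := by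
  have h1 : θ.rel (a ⊓ b) (b ⊓ b) := θ.inf_comp h (θ.refl b)
  have h2 : θ.rel (a ⊔ b) (b ⊔ b) := θ.sup_comp h (θ.refl b)
  rw [inf_idem] at h1
  rw [sup_idem] at h2
  exact θ.trans h1 (θ.symm h2)

lemma rel_of_inf_sup {θ : LatCon K} {a b : K} (h : θ.rel (a ⊓ b) (a ⊔ b)) : θ.rel a b := by
  have h1 : θ.rel a (a ⊔ b) := rel_of_between h inf_le_left le_sup_left le_rfl
  have h2 : θ.rel b (a ⊔ b) := rel_of_between h inf_le_right le_sup_right le_rfl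
  exact θ.trans h1 (θ.symm h2)

/-- In a finite lattice, a congruence collapsing every prime interval within `[a, b]`
collapses `[a, b]`. -/
lemma rel_of_forall_covBy {K : Type*} [Lattice K] [Finite K] {ψ : LatCon K} {a b : K}
    (hab : a ≤ b) (h : ∀ x y : K, a ≤ x → x ⋖ y → y ≤ b → ψ.rel x y) : ψ.rel a b := by
  have wf : WellFounded ((· > ·) : K → K → Prop) := (Finite.to_wellFoundedGT).wf
  suffices H : ∀ c : K, a ≤ c → c ≤ b → ψ.rel c b from H a le_rfl hab
  intro c
  induction c using WellFounded.induction wf with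
  | _ c IH =>
    intro hac hcb
    rcases eq_or_lt_of_le hcb with rfl | hlt
    · exact ψ.refl _
    · obtain ⟨d, hcd, hdb⟩ := exists_covBy_le_of_lt hlt
      exact ψ.trans (h c d hac hcd hdb) (IH d hcd.lt (hac.trans hcd.le) hdb)

/-- Extraction of a single generator for a prime interval collapsed by `gen s`. -/
lemma exists_gen_of_covBy {s : K → K → Prop} {u v : K} (huv : u ⋖ v)
    (h : (gen s).rel u v) : ∃ a b, s a b ∧ (conOf a b).rel u v := by
  classical
  set R : K → K → Prop := fun x y => ∃ a b, s a b ∧ (conOf a b).rel x y with hR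
  have hRsymm : Symmetric R := fun x y ⟨a, b, hs, hr⟩ => ⟨a, b, hs, (conOf a b).symm hr⟩
  have lift_sup : ∀ (c : K) {x y : K}, Relation.ReflTransGen R x y →
      Relation.ReflTransGen R (x ⊔ c) (y ⊔ c) := by
    intro c x y hxy
    induction hxy with
    | refl => exact .refl
    | tail _ hstep ih =>
      obtain ⟨a, b, hs, hr⟩ := hstep
      exact .tail ih ⟨a, b, hs, (conOf a b).sup_comp hr ((conOf a b).refl c)⟩
  have lift_inf : ∀ (c : K) {x y : K}, Relation.ReflTransGen R x y →
      Relation.ReflTransGen R (x ⊓ c) (y ⊓ c) := by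
    intro c x y hxy
    induction hxy with
    | refl => exact .refl
    | tail _ hstep ih =>
      obtain ⟨a, b, hs, hr⟩ := hstep
      exact .tail ih ⟨a, b, hs, (conOf a b).inf_comp hr ((conOf a b).refl c)⟩
  set T : LatCon K :=
    { rel := Relation.ReflTransGen R
      refl := fun _ => .refl
      symm := fun hxy => (@Relation.ReflTransGen.stdSymm _ R ⟨fun _ _ h => hRsymm h⟩).symm _ _ hxy
      trans := fun h₁ h₂ => h₁.trans h₂
      sup_comp := by
        intro p q r t h₁ h₂
        have step1 := lift_sup r h₁
        have step2 := lift_sup q h₂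
        rw [sup_comm r q, sup_comm t q] at step2
        exact step1.trans step2
      inf_comp := by
        intro p q r t h₁ h₂
        have step1 := lift_inf r h₁
        have step2 := lift_inf q h₂
        rw [inf_comm r q, inf_comm t q] at step2
        exact step1.trans step2 } with hT
  have hTuv : Relation.ReflTransGen R u v :=
    h T (fun a b hab => Relation.ReflTransGen.single ⟨a, b, hab, conOf_rel_self a b⟩)
  -- the interval [u, v] has exactly two elements
  have two : ∀ w : K, u ≤ w → w ≤ v → w = u ∨ w = v := by
    intro w h1 h2
    rcases h1.lt_or_eq with hlt | heq
    · rcases h2.lt_or_eq with hlt2 | heq2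
      · exact absurd hlt2 (huv.2 hlt)
      · exact Or.inr heq2
    · exact Or.inl heq.symm
  have main : ∀ {x y : K}, Relation.ReflTransGen R x y →
      (x ⊔ u) ⊓ v = (y ⊔ u) ⊓ v ∨ ∃ a b, s a b ∧ (conOf a b).rel u v := by
    intro x y hxy
    induction hxy with
    | refl => exact Or.inl rfl
    | @tail p q _ hstep ih =>
      rcases ih with ih | ih
      · obtain ⟨a, b, hs, hr⟩ := hstep
        have hr' : (conOf a b).rel ((p ⊔ u) ⊓ v) ((q ⊔ u) ⊓ v) :=
          (conOf a b).inf_comp ((conOf a b).sup_comp hr ((conOf a b).refl u))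
            ((conOf a b).refl v)
        have hbp : u ≤ (p ⊔ u) ⊓ v := le_inf le_sup_right huv.le
        have hbq : u ≤ (q ⊔ u) ⊓ v := le_inf le_sup_right huv.le
        rcases two _ hbp inf_le_right with hp | hp <;>
          rcases two _ hbq inf_le_right with hq | hq
        · exact Or.inl (ih.trans (hp.trans hq.symm))
        · rw [hp, hq] at hr'
          exact Or.inr ⟨a, b, hs, hr'⟩
        · rw [hp, hq] at hr'
          exact Or.inr ⟨a, b, hs, (conOf a b).symm hr'⟩
        · exact Or.inl (ih.trans (hp.trans hq.symm))
      · exact Or.inr ih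
  rcases main hTuv with hmain | hmain
  · exfalso
    rw [sup_idem, inf_eq_left.mpr huv.le, sup_eq_left.mpr huv.le, inf_idem] at hmain
    exact huv.ne hmain
  · exact hmain

end LatCon

/-- **Lemma 3 (variant of Lemmas 245 and 246 of [LTF]).** Let `L` be a sublattice of a finite
lattice `K` such that every congruence of `L` extends to `K`. Then `K` is a
congruence-preserving extension of `L` iff for every prime interval `[u, v]` of `K` not in `L`
there is a prime interval `[u', v']` of `L` with `con_K(u, v) = con_K(u', v')`. -/
theorem congruence_preserving_iff_prime_intervals
    {K : Type*} [Lattice K] [Finite K] (L : Sublattice K)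
    (hext : ∀ α : LatCon L, ∃ θ : LatCon K, θ.restrict L = α) :
    IsCongPresExt L ↔
      ∀ u v : K, u ⋖ v → ¬ (u ∈ L ∧ v ∈ L) →
        ∃ u' v' : L, u' ⋖ v' ∧
          LatCon.conOf u v = LatCon.conOf (u' : K) (v' : K) := by
  classical
  constructor
  · -- congruence-preserving ⇒ prime interval condition
    intro hcp u v huv hne
    set θ : LatCon K := LatCon.conOf u v with hθ
    -- generators: prime intervals of L collapsed by θ
    set s : K → K → Prop := fun x y =>
      ∃ (hx : x ∈ L) (hy : y ∈ L), (⟨x, hx⟩ : L) ⋖ ⟨y, hy⟩ ∧ θ.rel x y with hs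
    set Φ : LatCon K := LatCon.gen s with hΦ
    have hΦle : Φ ≤ θ := LatCon.gen_le (fun a b ⟨_, _, _, hr⟩ => hr)
    -- the restrictions of Φ and θ to L agree
    have hrestr : Φ.restrict L = θ.restrict L := by
      apply le_antisymm
      · intro x y hxy
        exact hΦle hxy
      · intro a b hab
        -- hab : θ.rel ↑a ↑b
        have hab' : θ.rel ↑(a ⊓ b) ↑(a ⊔ b) := by
          rw [Sublattice.coe_inf, Sublattice.coe_sup]
          exact LatCon.rel_inf_sup hab
        have key : (Φ.restrict L).rel (a ⊓ b) (a ⊔ b) := by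
          apply LatCon.rel_of_forall_covBy (inf_le_left.trans le_sup_left)
          intro x y hx hxy hy
          have hx' : (↑(a ⊓ b) : K) ≤ ↑x := hx
          have hy' : (↑y : K) ≤ ↑(a ⊔ b) := hy
          have hrel : θ.rel ↑x ↑y :=
            LatCon.rel_of_between hab' hx' (le_of_lt hxy.lt) hy'
          exact LatCon.gen_rel_of s ⟨x.2, y.2, hxy, hrel⟩
        exact LatCon.rel_of_inf_sup key
    have hΦθ : Φ = θ := hcp.1 hrestr
    have huvΦ : Φ.rel u v := by rw [hΦθ]; exact LatCon.conOf_rel_self u v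
    obtain ⟨a, b, ⟨ha, hb, hcov, hrel⟩, hcon⟩ := LatCon.exists_gen_of_covBy huv huvΦ
    refine ⟨⟨a, ha⟩, ⟨b, hb⟩, hcov, ?_⟩
    apply le_antisymm
    · exact LatCon.conOf_le hcon
    · exact LatCon.conOf_le hrel
  · -- prime interval condition ⇒ congruence-preserving
    intro hpi
    constructor
    · -- injectivity
      intro θ ψ hθψ
      simp only at hθψ
      have key : ∀ θ ψ : LatCon K, θ.restrict L = ψ.restrict L → θ ≤ ψ := by
        intro θ ψ hθψ x y hxy
        apply LatCon.rel_of_inf_sup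
        apply LatCon.rel_of_forall_covBy inf_le_sup
        intro p q hp hpq hq
        have hrel : θ.rel p q :=
          LatCon.rel_of_between (LatCon.rel_inf_sup hxy) hp hpq.le hq
        by_cases hmem : p ∈ L ∧ q ∈ L
        · have : (θ.restrict L).rel ⟨p, hmem.1⟩ ⟨q, hmem.2⟩ := hrel
          rw [hθψ] at this
          exact this
        · obtain ⟨u', v', _, hcon⟩ := hpi p q hpq hmem
          have h1 : θ.rel ↑u' ↑v' := (hcon ▸ LatCon.conOf_le hrel) (LatCon.conOf_rel_self _ _)
          have h2 : (θ.restrict L).rel u' v' := h1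
          rw [hθψ] at h2
          have h3 : ψ.rel ↑u' ↑v' := h2
          have h4 : LatCon.conOf p q ≤ ψ := hcon ▸ LatCon.conOf_le h3
          exact h4 (LatCon.conOf_rel_self p q)
      exact le_antisymm (key θ ψ hθψ) (key ψ θ hθψ.symm)
    · -- surjectivity
      intro α
      exact hext α

end ForkCongruence
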